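/- Let G be a countable group containing a subgroup isomorphic to the free group F₂ on two generators. Then for every probability-measure-preserving Borel action of G on a standard probability space (X, μ), there is a G-invariant Borel probability measure ν on the Bernoulli shift 2^G = {1,2}^G (with the left shift action) such that G ⟶ (2^G, ν) factors onto G ⟶ (X, μ), i.e. there is a ν-almost-everywhere defined G-equivariant Borel map φ : 2^G → X with φ_*ν = μ. -/

import Mathlib

set_option linter.unusedSectionVars false
set_option maxHeartbeats 1000000

open MeasureTheory

/-- The left shift action of `G` on the Bernoulli shift `K^G`. -/
def bshift {G : Type*} [Group G] (K : Type*) (g : G) (x : G → K) : G → K :=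
  fun h => x (g⁻¹ * h)

namespace BFactor

open TopologicalSpace




/-- shift automorphism of `FreeGroup ℤ` -/
noncomputable def shiftAut (k : ℤ) : MulAut (FreeGroup ℤ) :=
  FreeGroup.freeGroupCongr (Equiv.addRight k)

lemma shiftAut_of (k m : ℤ) : shiftAut k (FreeGroup.of m) = FreeGroup.of (m + k) := by
  simp [shiftAut]

lemma mulAut_ext {f g : MulAut (FreeGroup ℤ)}
    (h : ∀ a, f (FreeGroup.of a) = g (FreeGroup.of a)) : f = g :=
  MulEquiv.toMonoidHom_injective (FreeGroup.ext_hom _ _ h)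

/-- ℤ acting on FreeGroup ℤ by shifting indices -/
noncomputable def shiftHom : Multiplicative ℤ →* MulAut (FreeGroup ℤ) :=
  MonoidHom.mk' (fun k => shiftAut k.toAdd) (by
    intro a b
    apply mulAut_ext
    intro m
    simp only [MulAut.mul_apply, shiftAut_of, toAdd_mul]
    congr 1
    ring)

/-- map `FreeGroup ℤ → F₂` sending `n ↦ aⁿ b a⁻ⁿ` -/
noncomputable def jmap : FreeGroup ℤ →* FreeGroup (Fin 2) :=
  FreeGroup.lift fun n =>
    FreeGroup.of (0 : Fin 2) ^ n * FreeGroup.of (1 : Fin 2) * FreeGroup.of (0 : Fin 2) ^ (-n)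

/-- detector homomorphism into the semidirect product -/
noncomputable def θmap : FreeGroup (Fin 2) →* SemidirectProduct (FreeGroup ℤ) (Multiplicative ℤ) shiftHom :=
  FreeGroup.lift fun i =>
    if i = 0 then SemidirectProduct.inr (Multiplicative.ofAdd 1)
    else SemidirectProduct.inl (FreeGroup.of (0 : ℤ))

lemma θmap_jmap (w : FreeGroup ℤ) : θmap (jmap w) = SemidirectProduct.inl w := by
  have : θmap.comp jmap = SemidirectProduct.inl := by
    apply FreeGroup.ext_hom
    intro n
    simp only [MonoidHom.comp_apply, jmap, FreeGroup.lift_apply_of]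
    rw [map_mul, map_mul, map_zpow, map_zpow]
    simp only [θmap, FreeGroup.lift_apply_of]
    norm_num
    have h1 : (Multiplicative.ofAdd (1:ℤ)) ^ n = Multiplicative.ofAdd n := by
      rw [← ofAdd_zsmul]; norm_num
    rw [← map_zpow SemidirectProduct.inr (Multiplicative.ofAdd (1:ℤ)) n, h1, ← map_inv SemidirectProduct.inr]
    rw [← SemidirectProduct.inl_aut (φ := shiftHom) (Multiplicative.ofAdd n) (FreeGroup.of 0)]
    congr 1
    show shiftAut _ _ = _
    rw [shiftAut_of]
    norm_num
  exact DFunLike.congr_fun this w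

lemma jmap_injective : Function.Injective jmap := by
  intro x y h
  have := congrArg θmap h
  rw [θmap_jmap, θmap_jmap] at this
  exact SemidirectProduct.inl_injective this



lemma fin2_cancel (a c : Fin 2) : a + (a + c) = c := by revert a c; decide

section Walk

variable {G : Type*} [Group G] (jh : FreeGroup ℤ →* G)

/-- group elements used as edge labels -/
noncomputable def yel (n : ℤ) : G := jh (FreeGroup.of n)

/-- walk along a word -/
noncomputable def walk (t : G) : List (ℤ × Bool) → G
  | [] => t
  | (n, true) :: L => walk (t * yel jh n) L
  | (n, false) :: L => walk (t * (yel jh n)⁻¹) L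

/-- valuation of a word against a field `η` -/
noncomputable def lval (η : G → ℤ → Fin 2) (t : G) : List (ℤ × Bool) → Fin 2
  | [] => 0
  | (n, true) :: L => η t n + lval η (t * yel jh n) L
  | (n, false) :: L => η (t * (yel jh n)⁻¹) n + lval η (t * (yel jh n)⁻¹) L

lemma walk_append (t : G) (L₁ L₂ : List (ℤ × Bool)) :
    walk jh t (L₁ ++ L₂) = walk jh (walk jh t L₁) L₂ := by
  induction L₁ generalizing t with
  | nil => rfl
  | cons p L ih => rcases p with ⟨n, _ | _⟩ <;> simp [walk, ih]

lemma lval_append (η : G → ℤ → Fin 2) (t : G) (L₁ L₂ : List (ℤ × Bool)) :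
    lval jh η t (L₁ ++ L₂) = lval jh η t L₁ + lval jh η (walk jh t L₁) L₂ := by
  induction L₁ generalizing t with
  | nil => simp [lval, walk]
  | cons p L ih =>
      rcases p with ⟨n, _ | _⟩ <;> simp [lval, walk, ih, add_assoc]

lemma walk_cancel (t : G) (x : ℤ) (b : Bool) (L : List (ℤ × Bool)) :
    walk jh t ((x, b) :: (x, !b) :: L) = walk jh t L := by
  cases b <;> simp [walk]

lemma lval_cancel (η : G → ℤ → Fin 2) (t : G) (x : ℤ) (b : Bool) (L : List (ℤ × Bool)) :
    lval jh η t ((x, b) :: (x, !b) :: L) = lval jh η t L := by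
  cases b <;> simp [lval, fin2_cancel]

lemma lval_step (η : G → ℤ → Fin 2) (t : G) {L₁ L₂ : List (ℤ × Bool)}
    (h : FreeGroup.Red.Step L₁ L₂) : lval jh η t L₁ = lval jh η t L₂ := by
  cases h with
  | @not L₁ L₂ x b =>
      rw [lval_append, lval_append, lval_cancel]

lemma walk_step (t : G) {L₁ L₂ : List (ℤ × Bool)}
    (h : FreeGroup.Red.Step L₁ L₂) : walk jh t L₁ = walk jh t L₂ := by
  cases h with
  | @not L₁ L₂ x b =>
      rw [walk_append, walk_append, walk_cancel]

/-- valuation of a free group element -/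
noncomputable def fval (η : G → ℤ → Fin 2) (t : G) : FreeGroup ℤ → Fin 2 :=
  Quot.lift (lval jh η t) (fun _ _ h => lval_step jh η t h)

lemma fval_mk (η : G → ℤ → Fin 2) (t : G) (L : List (ℤ × Bool)) :
    fval jh η t (FreeGroup.mk L) = lval jh η t L := rfl

lemma mk_single_false (n : ℤ) :
    FreeGroup.mk [(n, false)] = (FreeGroup.of (n : ℤ))⁻¹ := by
  have h : FreeGroup.of (n:ℤ) * FreeGroup.mk [(n, false)] = 1 := by
    show FreeGroup.mk [(n, true)] * FreeGroup.mk [(n, false)] = 1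
    rw [FreeGroup.mul_mk]
    exact Quot.sound (@FreeGroup.Red.Step.not ℤ [] [] n true)
  exact eq_inv_of_mul_eq_one_right h

lemma walk_eq (t : G) (L : List (ℤ × Bool)) :
    walk jh t L = t * jh (FreeGroup.mk L) := by
  induction L generalizing t with
  | nil =>
      show t = t * jh (FreeGroup.mk [])
      rw [← FreeGroup.one_eq_mk, map_one, mul_one]
  | cons p L ih =>
      rcases p with ⟨n, _ | _⟩
      · show walk jh (t * (yel jh n)⁻¹) L = _
        rw [ih]
        have : FreeGroup.mk ((n, false) :: L) = FreeGroup.mk [(n,false)] * FreeGroup.mk L := by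
          rw [FreeGroup.mul_mk]; rfl
        rw [this, mk_single_false, map_mul, map_inv]
        simp [yel, mul_assoc]
      · show walk jh (t * yel jh n) L = _
        rw [ih]
        have : FreeGroup.mk ((n, true) :: L) = FreeGroup.mk [(n,true)] * FreeGroup.mk L := by
          rw [FreeGroup.mul_mk]; rfl
        rw [this, map_mul]
        show t * yel jh n * jh (FreeGroup.mk L) = _
        simp [yel, FreeGroup.of, mul_assoc]

lemma fval_mul_of (η : G → ℤ → Fin 2) (t : G) (w : FreeGroup ℤ) (n : ℤ) :
    fval jh η t (w * FreeGroup.of n) = fval jh η t w + η (t * jh w) n := by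
  induction w using Quot.ind with
  | _ L =>
      have h1 : FreeGroup.mk L * FreeGroup.of n = FreeGroup.mk (L ++ [(n, true)]) := by
        show _ * FreeGroup.mk [(n,true)] = _
        rw [FreeGroup.mul_mk]
      show fval jh η t (FreeGroup.mk L * FreeGroup.of n) = _
      rw [h1, fval_mk, lval_append, walk_eq]
      show _ + (η (t * jh (FreeGroup.mk L)) n + 0) = _
      rw [add_zero]
      rfl

lemma lval_measurable (t : G) (L : List (ℤ × Bool)) :
    Measurable fun η : G → ℤ → Fin 2 => lval jh η t L := by
  induction L generalizing t with
  | nil => simp only [lval]; exact measurable_const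
  | cons p L ih =>
      rcases p with ⟨n, _ | _⟩
      · simp only [lval]
        exact (show Measurable fun η : G → ℤ → Fin 2 => η (t * (yel jh n)⁻¹) n from (measurable_pi_apply n).comp
          (measurable_pi_apply (t * (yel jh n)⁻¹))).add (ih _)
      · simp only [lval]
        exact (show Measurable fun η : G → ℤ → Fin 2 => η t n from (measurable_pi_apply n).comp (measurable_pi_apply t)).add (ih _)

end Walk


/-! ### Coset decomposition -/

section Coset

variable {G : Type*} [Group G] (jh : FreeGroup ℤ →* G)

def cosetSetoid : Setoid G where
  r a b := ∃ u : FreeGroup ℤ, b = a * jh u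
  iseqv := by
    constructor
    · exact fun a => ⟨1, by simp⟩
    · rintro a b ⟨u, rfl⟩
      exact ⟨u⁻¹, by rw [map_inv, mul_inv_cancel_right]⟩
    · rintro a b c ⟨u, rfl⟩ ⟨v, rfl⟩
      exact ⟨u * v, by rw [map_mul, mul_assoc]⟩

noncomputable def crep (g : G) : G := Quotient.out (Quotient.mk (cosetSetoid jh) g)

lemma crep_rel (g : G) : ∃ u : FreeGroup ℤ, g = crep jh g * jh u :=
  Quotient.exact (Quotient.out_eq (Quotient.mk (cosetSetoid jh) g))

lemma crep_mul (g : G) (u : FreeGroup ℤ) : crep jh (g * jh u) = crep jh g := by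
  unfold crep
  congr 1
  exact (Quotient.sound (⟨u, rfl⟩ : (cosetSetoid jh).r g (g * jh u))).symm

noncomputable def cwrd (g : G) : FreeGroup ℤ := (crep_rel jh g).choose

lemma cwrd_spec (g : G) : g = crep jh g * jh (cwrd jh g) := (crep_rel jh g).choose_spec

lemma cwrd_mul (hj : Function.Injective jh) (g : G) (u : FreeGroup ℤ) :
    cwrd jh (g * jh u) = cwrd jh g * u := by
  apply hj
  apply mul_left_cancel (a := crep jh g)
  have h1 := cwrd_spec jh (g * jh u)
  rw [crep_mul jh g u] at h1
  rw [← h1, map_mul, ← mul_assoc, ← cwrd_spec jh g]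

noncomputable def sfun (η : G → ℤ → Fin 2) (g : G) : Fin 2 :=
  fval jh η (crep jh g) (cwrd jh g)

lemma sfun_key (hj : Function.Injective jh) (η : G → ℤ → Fin 2) (g : G) (n : ℤ) :
    sfun jh η g + sfun jh η (g * yel jh n) = η g n := by
  have e1 : g * yel jh n = g * jh (FreeGroup.of n) := rfl
  unfold sfun
  rw [e1, crep_mul jh g (FreeGroup.of n), cwrd_mul jh hj g (FreeGroup.of n), fval_mul_of,
    ← cwrd_spec jh g]
  exact fin2_cancel _ _

lemma sfun_measurable (g : G) : Measurable fun η => sfun jh η g := by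
  unfold sfun
  induction (cwrd jh g) using Quot.ind with
  | _ L => exact lval_measurable jh (crep jh g) L

end Coset

/-! ### The equivariant linear map and its kernel -/

noncomputable local instance : TopologicalSpace (Fin 2) := ⊥
local instance : DiscreteTopology (Fin 2) := ⟨rfl⟩
local instance : BorelSpace (Fin 2) := ⟨borel_eq_top_of_discrete.symm⟩
local instance : IsTopologicalAddGroup (Fin 2) :=
  { continuous_add := continuous_of_discreteTopology
    continuous_neg := continuous_of_discreteTopology }

section OW

variable {G : Type*} [Group G] [Countable G] (jh : FreeGroup ℤ →* G)

lemma bshift_comp (g g' : G) (K : Type*) (ω : G → K) :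
    bshift K g (bshift K g' ω) = bshift K (g * g') ω := by
  funext h; simp [bshift, mul_assoc]

lemma bshift_add (g : G) (ω ω' : G → Fin 2) :
    bshift (Fin 2) g (ω + ω') = bshift (Fin 2) g ω + bshift (Fin 2) g ω' := rfl

lemma bshift_measurable (K : Type*) [MeasurableSpace K] (g : G) :
    Measurable (bshift K g) := by
  refine measurable_pi_iff.mpr fun h => ?_
  exact measurable_pi_apply _

lemma bshift_continuous (g : G) : Continuous (bshift (Fin 2) g) := by
  refine continuous_pi fun h => ?_
  exact continuous_apply _

noncomputable def OWmap (ω : G → Fin 2) : G → ℤ → Fin 2 :=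
  fun g n => ω g + ω (g * yel jh n)

lemma OWmap_add (ω ω' : G → Fin 2) :
    OWmap jh (ω + ω') = OWmap jh ω + OWmap jh ω' := by
  funext g n
  show (ω g + ω' g) + (ω (g * yel jh n) + ω' (g * yel jh n)) = _
  rw [add_add_add_comm]
  rfl

noncomputable def OWhom : (G → Fin 2) →+ (G → ℤ → Fin 2) :=
  AddMonoidHom.mk' (OWmap jh) (OWmap_add jh)

lemma OWmap_bshift (g₀ : G) (ω : G → Fin 2) :
    OWmap jh (bshift (Fin 2) g₀ ω) = bshift (ℤ → Fin 2) g₀ (OWmap jh ω) := by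
  funext g n
  show ω (g₀⁻¹ * g) + ω (g₀⁻¹ * (g * yel jh n)) = ω (g₀⁻¹ * g) + ω ((g₀⁻¹ * g) * yel jh n)
  rw [mul_assoc]

lemma OWmap_measurable : Measurable (OWmap jh) := by
  refine measurable_pi_iff.mpr fun g => measurable_pi_iff.mpr fun n => ?_
  exact (measurable_pi_apply g).add (measurable_pi_apply _)

lemma OWmap_continuous : Continuous (OWmap jh) := by
  refine continuous_pi fun g => continuous_pi fun n => ?_
  exact (continuous_apply g).add (continuous_apply _)

noncomputable def Kgrp : AddSubgroup (G → Fin 2) := (OWhom jh).ker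

lemma mem_Kgrp {ω : G → Fin 2} : ω ∈ Kgrp jh ↔ OWmap jh ω = 0 :=
  AddMonoidHom.mem_ker

end OW

/-! ### Haar measure invariance under automorphisms -/

lemma map_addHaar_eq {K : Type*} [AddCommGroup K] [TopologicalSpace K] [IsTopologicalAddGroup K]
    [CompactSpace K] [T2Space K] [SecondCountableTopology K] [MeasurableSpace K] [BorelSpace K]
    [Nonempty K] (e : K ≃ₜ K) (he : ∀ a b : K, e (a + b) = e a + e b) :
    Measure.map e (Measure.addHaarMeasure ⊤) =
      Measure.addHaarMeasure (⊤ : TopologicalSpace.PositiveCompacts K) := by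
  set m : Measure K := Measure.addHaarMeasure ⊤ with hm
  haveI : IsProbabilityMeasure m :=
    ⟨by rw [← TopologicalSpace.PositiveCompacts.coe_top (α := K)]
        exact Measure.addHaarMeasure_self⟩
  haveI : IsProbabilityMeasure (Measure.map e m) :=
    Measure.isProbabilityMeasure_map e.continuous.measurable.aemeasurable
  haveI : (Measure.map e m).IsAddLeftInvariant := by
    constructor
    intro c
    have h1 : (fun x => c + x) ∘ e = e ∘ (fun x => e.symm c + x) := by
      funext z
      show c + e z = e (e.symm c + z)
      rw [he, e.apply_symm_apply]
    rw [Measure.map_map (continuous_add_left c).measurable e.continuous.measurable, h1,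
      ← Measure.map_map e.continuous.measurable (continuous_add_left (e.symm c)).measurable,
      MeasureTheory.map_add_left_eq_self]
  have h2 := Measure.addHaarMeasure_unique (Measure.map e m) (⊤ : TopologicalSpace.PositiveCompacts K)
  rw [h2, TopologicalSpace.PositiveCompacts.coe_top, measure_univ, one_smul]

lemma not_countable_fun : ¬ Countable (ℤ → Fin 2) := by
  classical
  intro h
  have hinj : Function.Injective
      (fun s : Set ℤ => (fun n => if n ∈ s then (1 : Fin 2) else 0)) := by
    intro s t hst
    ext n
    have h1 := congrFun hst n
    by_cases hn : n ∈ s <;> by_cases hm : n ∈ t <;> simp [hn, hm] at h1 ⊢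
  obtain ⟨e, he⟩ := exists_injective_nat (ℤ → Fin 2)
  refine Function.cantor_injective
    (fun s : Set ℤ => (Int.ofNat (e (fun n => if n ∈ s then (1 : Fin 2) else 0)))) ?_
  intro s t hst
  apply hinj
  apply he
  exact Int.ofNat.inj hst

theorem factor_main {G : Type*} [Group G] [Countable G]
    (jh : FreeGroup ℤ →* G) (hj : Function.Injective jh)
    (X : Type) [MeasurableSpace X] [StandardBorelSpace X] [MulAction G X]
    (μ : Measure X) [IsProbabilityMeasure μ]
    (hmeas : ∀ g : G, Measurable fun x : X => g • x)
    (hinv : ∀ g : G, μ.map (fun x : X => g • x) = μ) :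
    ∃ ν : Measure (G → Fin 2), IsProbabilityMeasure ν ∧
      (∀ g : G, ν.map (bshift (Fin 2) g) = ν) ∧
      ∃ φ : (G → Fin 2) → X, Measurable φ ∧ ν.map φ = μ ∧
        ∀ g : G, ∀ᵐ x ∂ν, φ (bshift (Fin 2) g x) = g • φ x := by
  classical
  -- `X` is nonempty
  have hXne : Nonempty X := by
    by_contra h
    rw [not_nonempty_iff] at h
    have h1 : μ Set.univ = 1 := measure_univ
    rw [Set.univ_eq_empty_iff.mpr h] at h1
    simp at h1
  -- a measurable embedding of `X` into `ℤ → Fin 2` with measurable retraction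
  obtain ⟨f₀, hf₀⟩ := exists_measurableEmbedding_real X
  have hCu : ¬ Countable (ℤ → Fin 2) := not_countable_fun
  let eqC : ℝ ≃ᵐ (ℤ → Fin 2) := PolishSpace.measurableEquivOfNotCountable not_countable hCu
  set b : X → (ℤ → Fin 2) := fun x => eqC (f₀ x) with hbdef
  have hb : MeasurableEmbedding b := eqC.measurableEmbedding.comp hf₀
  obtain ⟨x₀⟩ := hXne
  set rmap : (ℤ → Fin 2) → X := Function.extend b id (fun _ => x₀) with hrdef
  have hrb : ∀ x, rmap (b x) = x := by
    intro x
    rw [hrdef, hb.injective.extend_apply]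
    rfl
  have hrmeas : Measurable rmap := hb.measurable_extend measurable_id measurable_const
  -- the equivariant itinerary map
  set Ψ : X → (G → ℤ → Fin 2) := fun x g => b (g⁻¹ • x) with hΨdef
  have hΨmeas : Measurable Ψ := by
    refine measurable_pi_iff.mpr fun g => ?_
    exact hb.measurable.comp (hmeas g⁻¹)
  have hΨequiv : ∀ (g : G) (x : X), Ψ (g • x) = bshift (ℤ → Fin 2) g (Ψ x) := by
    intro g x
    funext h
    show b (h⁻¹ • (g • x)) = b ((g⁻¹ * h)⁻¹ • x)
    rw [mul_inv_rev, inv_inv, mul_smul]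
  -- the section of `OWmap`
  set sY : (G → ℤ → Fin 2) → (G → Fin 2) := fun η g => sfun jh η g with hsYdef
  have hsYmeas : Measurable sY := measurable_pi_iff.mpr fun g => sfun_measurable jh g
  have hOWsY : ∀ η, OWmap jh (sY η) = η := by
    intro η
    funext g n
    exact sfun_key jh hj η g n
  -- the kernel subgroup and its Haar measure
  set Kg : AddSubgroup (G → Fin 2) := Kgrp jh with hKgdef
  have hKclosed : IsClosed (Kg : Set (G → Fin 2)) := by
    have h1 : (Kg : Set (G → Fin 2)) = OWmap jh ⁻¹' {0} := by
      ext ω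
      simp only [SetLike.mem_coe, Set.mem_preimage, Set.mem_singleton_iff]
      exact mem_Kgrp jh
    rw [h1]
    exact IsClosed.preimage (OWmap_continuous jh) isClosed_singleton
  haveI : CompactSpace ↥Kg := isCompact_iff_compactSpace.mp hKclosed.isCompact
  haveI : Nonempty ↥Kg := ⟨0⟩
  haveI : SecondCountableTopology ↥Kg := Subtype.secondCountableTopology _
  haveI : BorelSpace ↥Kg := Subtype.borelSpace _
  set mK : Measure ↥Kg := Measure.addHaarMeasure ⊤ with hmKdef
  haveI : IsProbabilityMeasure mK :=
    ⟨by rw [← TopologicalSpace.PositiveCompacts.coe_top (α := ↥Kg)]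
        exact Measure.addHaarMeasure_self⟩
  haveI : mK.IsAddLeftInvariant := Measure.isAddLeftInvariant_addHaarMeasure _
  -- shift homeomorphisms of the kernel
  have hKmem : ∀ (g : G) (ω : G → Fin 2), ω ∈ Kg → bshift (Fin 2) g ω ∈ Kg := by
    intro g ω hω
    have h1 : OWmap jh ω = 0 := (mem_Kgrp jh).mp hω
    refine (mem_Kgrp jh).mpr ?_
    rw [OWmap_bshift jh g ω, h1]
    rfl
  have hbshift_inv : ∀ (g : G) (ω : G → Fin 2),
      bshift (Fin 2) g⁻¹ (bshift (Fin 2) g ω) = ω := by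
    intro g ω
    rw [bshift_comp]
    funext h
    show ω ((g⁻¹ * g)⁻¹ * h) = ω h
    rw [inv_mul_cancel, inv_one, one_mul]
  let egH : G → (↥Kg ≃ₜ ↥Kg) := fun g =>
    { toFun := fun z => ⟨bshift (Fin 2) g (z : G → Fin 2), hKmem g _ z.2⟩
      invFun := fun z => ⟨bshift (Fin 2) g⁻¹ (z : G → Fin 2), hKmem g⁻¹ _ z.2⟩
      left_inv := fun z => Subtype.ext (hbshift_inv g _)
      right_inv := fun z => Subtype.ext (by
        show bshift (Fin 2) g (bshift (Fin 2) g⁻¹ (z : G → Fin 2)) = _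
        have := hbshift_inv g⁻¹ (z : G → Fin 2)
        rwa [inv_inv] at this)
      continuous_toFun :=
        Continuous.subtype_mk ((bshift_continuous g).comp continuous_subtype_val) _
      continuous_invFun :=
        Continuous.subtype_mk ((bshift_continuous g⁻¹).comp continuous_subtype_val) _ }
  have hegH_add : ∀ (g : G) (a c : ↥Kg), egH g (a + c) = egH g a + egH g c :=
    fun g a c => Subtype.ext rfl
  have hmapeg : ∀ g : G, mK.map (egH g) = mK := by
    intro g
    rw [hmKdef]
    exact map_addHaar_eq (egH g) (hegH_add g)
  have hKaddmeas : ∀ k : ↥Kg, Measurable (fun z : ↥Kg => z + k) := by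
    intro k
    apply Measurable.subtype_mk
    refine measurable_pi_iff.mpr fun g => ?_
    exact ((measurable_pi_apply g).comp measurable_subtype_coe).add measurable_const
  have hmapaddk : ∀ k : ↥Kg, mK.map (fun z : ↥Kg => z + k) = mK := by
    intro k
    have h1 : (fun z : ↥Kg => z + k) = (fun z : ↥Kg => k + z) := by
      funext z; rw [add_comm]
    rw [h1, MeasureTheory.map_add_left_eq_self]
  -- the coupling and the measure ν
  set enc : X × ↥Kg → (G → Fin 2) :=
    fun p => (p.2 : G → Fin 2) + sY (Ψ p.1) with hencdef
  have hencmeas : Measurable enc := by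
    refine measurable_pi_iff.mpr fun g => ?_
    apply Measurable.add
    · exact (measurable_pi_apply g).comp (measurable_subtype_coe.comp measurable_snd)
    · exact (measurable_pi_apply g).comp ((hsYmeas.comp hΨmeas).comp measurable_fst)
  set P : Measure (X × ↥Kg) := μ.prod mK with hPdef
  haveI : IsProbabilityMeasure P := by
    rw [hPdef]; infer_instance
  set ν : Measure (G → Fin 2) := P.map enc with hνdef
  haveI : IsProbabilityMeasure ν := Measure.isProbabilityMeasure_map hencmeas.aemeasurable
  -- the error terms
  have hkelmem : ∀ (g : G) (x : X),
      bshift (Fin 2) g (sY (Ψ x)) - sY (Ψ (g • x)) ∈ Kg := by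
    intro g x
    refine (mem_Kgrp jh).mpr ?_
    have h1 : OWmap jh (bshift (Fin 2) g (sY (Ψ x)) - sY (Ψ (g • x)))
        = OWmap jh (bshift (Fin 2) g (sY (Ψ x))) - OWmap jh (sY (Ψ (g • x))) :=
      map_sub (OWhom jh) _ _
    rw [h1, OWmap_bshift jh, hOWsY, hOWsY, hΨequiv g x, sub_self]
  set kel : G → X → ↥Kg :=
    fun g x => ⟨bshift (Fin 2) g (sY (Ψ x)) - sY (Ψ (g • x)), hkelmem g x⟩ with hkeldef
  have hsYΨ : Measurable fun x : X => sY (Ψ x) := hsYmeas.comp hΨmeas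
  have hkelmeas : ∀ g : G, Measurable (kel g) := by
    intro g
    apply Measurable.subtype_mk
    have h1 : Measurable fun x : X => bshift (Fin 2) g (sY (Ψ x)) :=
      (bshift_measurable (Fin 2) g).comp hsYΨ
    have h2 : Measurable fun x : X => sY (Ψ (g • x)) := hsYΨ.comp (hmeas g)
    refine measurable_pi_iff.mpr fun h => ?_
    exact ((measurable_pi_apply h).comp h1).sub ((measurable_pi_apply h).comp h2)
  -- invariance of ν
  have hshift : ∀ g : G, ν.map (bshift (Fin 2) g) = ν := by
    intro g
    set eT : X × ↥Kg → X × ↥Kg := fun p => (g • p.1, egH g p.2 + kel g p.1) with heTdef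
    have heTmeas : Measurable eT := by
      refine Measurable.prod ?_ ?_
      · exact (hmeas g).comp measurable_fst
      · apply Measurable.subtype_mk
        have h1 : Measurable fun p : X × ↥Kg => ((egH g p.2 : G → Fin 2)) :=
          measurable_subtype_coe.comp ((egH g).continuous.measurable.comp measurable_snd)
        have h2 : Measurable fun p : X × ↥Kg => ((kel g p.1 : G → Fin 2)) :=
          measurable_subtype_coe.comp ((hkelmeas g).comp measurable_fst)
        refine measurable_pi_iff.mpr fun h => ?_
        simp only [Pi.add_apply]
        exact ((measurable_pi_apply h).comp h1).add ((measurable_pi_apply h).comp h2)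
    have hPmap : P.map eT = P := by
      ext S hS
      rw [Measure.map_apply heTmeas hS, hPdef, Measure.prod_apply (heTmeas hS),
        Measure.prod_apply hS]
      have hfib : ∀ x : X, (Prod.mk x ⁻¹' (eT ⁻¹' S))
          = (fun z : ↥Kg => egH g z + kel g x) ⁻¹' (Prod.mk (g • x) ⁻¹' S) := by
        intro x
        ext z
        simp only [Set.mem_preimage, heTdef]
      have hψmeas : ∀ x : X, Measurable (fun z : ↥Kg => egH g z + kel g x) :=
        fun x => (hKaddmeas (kel g x)).comp (egH g).continuous.measurable
      have hmapψ : ∀ x : X, mK.map (fun z : ↥Kg => egH g z + kel g x) = mK := by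
        intro x
        have h1 : (fun z : ↥Kg => egH g z + kel g x)
            = (fun z : ↥Kg => z + kel g x) ∘ (egH g) := rfl
        rw [h1, ← Measure.map_map (hKaddmeas (kel g x)) (egH g).continuous.measurable,
          hmapeg g, hmapaddk (kel g x)]
      have hstep : ∀ x : X, mK (Prod.mk x ⁻¹' (eT ⁻¹' S)) = mK (Prod.mk (g • x) ⁻¹' S) := by
        intro x
        rw [hfib x, ← Measure.map_apply (hψmeas x) (measurable_prodMk_left hS), hmapψ x]
      calc ∫⁻ x, mK (Prod.mk x ⁻¹' (eT ⁻¹' S)) ∂μ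
          = ∫⁻ x, mK (Prod.mk (g • x) ⁻¹' S) ∂μ := by
            apply lintegral_congr
            exact hstep
        _ = ∫⁻ x, mK (Prod.mk x ⁻¹' S) ∂μ := by
            conv_rhs => rw [← hinv g]
            rw [lintegral_map (measurable_measure_prodMk_left hS) (hmeas g)]
    have hcomm : (bshift (Fin 2) g) ∘ enc = enc ∘ eT := by
      funext p
      show bshift (Fin 2) g ((p.2 : G → Fin 2) + sY (Ψ p.1))
        = ((egH g p.2 + kel g p.1 : ↥Kg) : G → Fin 2) + sY (Ψ (g • p.1))
      rw [bshift_add]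
      show bshift (Fin 2) g (p.2 : G → Fin 2) + bshift (Fin 2) g (sY (Ψ p.1))
        = (bshift (Fin 2) g (p.2 : G → Fin 2)
            + (bshift (Fin 2) g (sY (Ψ p.1)) - sY (Ψ (g • p.1)))) + sY (Ψ (g • p.1))
      abel
    rw [hνdef, Measure.map_map (bshift_measurable (Fin 2) g) hencmeas, hcomm,
      ← Measure.map_map hencmeas heTmeas, hPmap]
  refine ⟨ν, inferInstance, hshift, ?_⟩
  -- the factor map
  set φf : (G → Fin 2) → X := fun ω => rmap (OWmap jh ω 1) with hφdef
  have hφmeas : Measurable φf :=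
    hrmeas.comp ((measurable_pi_apply 1).comp (OWmap_measurable jh))
  have hOWenc : ∀ p : X × ↥Kg, OWmap jh (enc p) = Ψ p.1 := by
    intro p
    have hz : OWmap jh (p.2 : G → Fin 2) = 0 := (mem_Kgrp jh).mp p.2.2
    show OWmap jh ((p.2 : G → Fin 2) + sY (Ψ p.1)) = Ψ p.1
    rw [OWmap_add jh, hz, hOWsY, zero_add]
  have hφenc : ∀ p : X × ↥Kg, φf (enc p) = p.1 := by
    intro p
    show rmap (OWmap jh (enc p) 1) = p.1
    rw [hOWenc p]
    show rmap (b ((1 : G)⁻¹ • p.1)) = p.1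
    rw [inv_one, one_smul, hrb]
  have hmapφ : ν.map φf = μ := by
    rw [hνdef, Measure.map_map hφmeas hencmeas]
    have h1 : φf ∘ enc = Prod.fst := funext hφenc
    rw [h1, hPdef, Measure.map_fst_prod, measure_univ, one_smul]
  refine ⟨φf, hφmeas, hmapφ, ?_⟩
  intro g
  letI := upgradeStandardBorel X
  have hEmeas : MeasurableSet {ω : G → Fin 2 | φf (bshift (Fin 2) g ω) = g • φf ω} := by
    apply StronglyMeasurable.measurableSet_eq_fun
    · exact (hφmeas.comp (bshift_measurable (Fin 2) g)).stronglyMeasurable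
    · exact ((hmeas g).comp hφmeas).stronglyMeasurable
  rw [hνdef, MeasureTheory.ae_map_iff hencmeas.aemeasurable hEmeas]
  apply ae_of_all
  intro p
  show φf (bshift (Fin 2) g (enc p)) = g • φf (enc p)
  have h1 : OWmap jh (bshift (Fin 2) g (enc p)) = bshift (ℤ → Fin 2) g (Ψ p.1) := by
    rw [OWmap_bshift jh, hOWenc p]
  show rmap (OWmap jh (bshift (Fin 2) g (enc p)) 1) = g • φf (enc p)
  rw [h1, hφenc p]
  show rmap (Ψ p.1 (g⁻¹ * 1)) = g • p.1
  rw [mul_one]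
  show rmap (b ((g⁻¹)⁻¹ • p.1)) = g • p.1
  rw [inv_inv, hrb]

end BFactor

open MeasureTheory

theorem stmt1 (G : Type*) [Group G] [Countable G]
    (ι : FreeGroup (Fin 2) →* G) (hι : Function.Injective ι) :
    ∀ (X : Type) [MeasurableSpace X] [StandardBorelSpace X] [MulAction G X]
      (μ : Measure X) [IsProbabilityMeasure μ],
      (∀ g : G, Measurable fun x : X => g • x) →
      (∀ g : G, μ.map (fun x : X => g • x) = μ) →
      ∃ ν : Measure (G → Fin 2), IsProbabilityMeasure ν ∧
        (∀ g : G, ν.map (bshift (Fin 2) g) = ν) ∧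
        ∃ φ : (G → Fin 2) → X, Measurable φ ∧ ν.map φ = μ ∧
          ∀ g : G, ∀ᵐ x ∂ν, φ (bshift (Fin 2) g x) = g • φ x := by
  intro X _ _ _ μ _ hmeas hinv
  have hjinj : Function.Injective (ι.comp BFactor.jmap) := by
    rw [MonoidHom.coe_comp]
    exact Function.Injective.comp hι BFactor.jmap_injective
  exact BFactor.factor_main (ι.comp BFactor.jmap) hjinj X μ hmeas hinv
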